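/- Let C be a chain complex and D ⊆ C a graded abelian subgroup. Then the inclusion Inf(D,C) → Sup(D,C) induces an isomorphism on homology in every degree. -/
import Mathlib


/-- Oriented `n`-simplices on a vertex set `V`: finsets of cardinality `n+1`. -/
abbrev Simp (V : Type) (n : ℕ) : Type := {σ : Finset V // σ.card = n + 1}

/-- The group of `n`-chains with coefficients in `G` on the full simplex on `V`. -/
abbrev Ch (V : Type) (G : Type) [AddCommGroup G] (n : ℕ) : Type := Simp V n →₀ G

/-- Boundary of a single `(n+1)`-simplex with coefficient `g`. -/
noncomputable def bdryFun (V : Type) [LinearOrder V] (G : Type) [AddCommGroup G]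
    (n : ℕ) (σ : Simp V (n + 1)) (g : G) : Ch V G n :=
  ∑ v ∈ σ.1.attach, Finsupp.single
    ⟨σ.1.erase v.1, by rw [Finset.card_erase_of_mem v.2, σ.2]; omega⟩
    (((-1 : ℤ) ^ ((σ.1.filter fun w => w < v.1).card)) • g)

/-- The simplicial boundary homomorphism `C_{n+1} → C_n`. -/
noncomputable def bdry (V : Type) [LinearOrder V] (G : Type) [AddCommGroup G]
    (n : ℕ) : Ch V G (n + 1) →+ Ch V G n :=
  Finsupp.liftAddHom fun σ =>
    { toFun := bdryFun V G n σ
      map_zero' := by simp [bdryFun]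
      map_add' := fun a b => by
        simp [bdryFun, smul_add, Finsupp.single_add, Finset.sum_add_distrib] }

/-- The subgroup `G(K)_n ⊆ C_n` of chains supported on the `n`-hyperedges of `K`. -/
def chainsOn (V : Type) [LinearOrder V] (G : Type) [AddCommGroup G]
    (K : Set (Finset V)) (n : ℕ) : AddSubgroup (Ch V G n) where
  carrier := {c | ∀ σ ∈ c.support, (σ : Simp V n).1 ∈ K}
  zero_mem' := by simp
  add_mem' := by
    intro a b ha hb σ hσ
    rcases Finset.mem_union.mp (Finsupp.support_add hσ) with h | h
    exacts [ha σ h, hb σ h]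
  neg_mem' := by
    intro a ha σ hσ
    exact ha σ (by simpa using hσ)

section Generic

variable {C : ℕ → Type} [∀ n, AddCommGroup (C n)]

/-- The infimum chain complex of a graded subgroup `D` inside `(C, d)`. -/
def InfC (d : ∀ n, C (n + 1) →+ C n) (D : ∀ n, AddSubgroup (C n)) :
    ∀ n, AddSubgroup (C n)
  | 0 => D 0
  | (n + 1) => D (n + 1) ⊓ (D n).comap (d n)

/-- The supremum chain complex of a graded subgroup `D` inside `(C, d)`. -/
def SupC (d : ∀ n, C (n + 1) →+ C n) (D : ∀ n, AddSubgroup (C n)) (n : ℕ) :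
    AddSubgroup (C n) :=
  D n ⊔ (D (n + 1)).map (d n)

/-- Relative cycles of the pair of graded subgroups `(K, L)`. -/
def relZ (d : ∀ n, C (n + 1) →+ C n) (K L : ∀ n, AddSubgroup (C n)) :
    ∀ n, AddSubgroup (C n)
  | 0 => K 0
  | (n + 1) => K (n + 1) ⊓ (L n).comap (d n)

/-- Relative boundaries of the pair of graded subgroups `(K, L)`. -/
def relB (d : ∀ n, C (n + 1) →+ C n) (K L : ∀ n, AddSubgroup (C n)) (n : ℕ) :
    AddSubgroup (C n) :=
  ((K (n + 1)).map (d n) ⊔ L n) ⊓ relZ d K L n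

/-- Relative homology of the pair `(K, L)`, i.e. the homology of the quotient chain
complex `K/L`.  (Taking `L = ⊥` gives the absolute homology of `K`.) -/
abbrev relH (d : ∀ n, C (n + 1) →+ C n) (K L : ∀ n, AddSubgroup (C n)) (n : ℕ) : Type _ :=
  relZ d K L n ⧸ (relB d K L n).addSubgroupOf (relZ d K L n)

theorem relZ_mono (d : ∀ n, C (n + 1) →+ C n) {K L K' L' : ∀ n, AddSubgroup (C n)}
    (hK : ∀ n, K n ≤ K' n) (hL : ∀ n, L n ≤ L' n) :
    ∀ n, relZ d K L n ≤ relZ d K' L' n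
  | 0 => hK 0
  | (n + 1) => inf_le_inf (hK (n + 1)) (AddSubgroup.comap_mono (hL n))

theorem relB_mono (d : ∀ n, C (n + 1) →+ C n) {K L K' L' : ∀ n, AddSubgroup (C n)}
    (hK : ∀ n, K n ≤ K' n) (hL : ∀ n, L n ≤ L' n) (n : ℕ) :
    relB d K L n ≤ relB d K' L' n :=
  inf_le_inf (sup_le_sup (AddSubgroup.map_mono (hK (n + 1))) (hL n))
    (relZ_mono d hK hL n)

/-- The map on relative homology induced by an inclusion of pairs. -/
noncomputable def inducedRelMap (d : ∀ n, C (n + 1) →+ C n)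
    {K L K' L' : ∀ n, AddSubgroup (C n)}
    (hK : ∀ n, K n ≤ K' n) (hL : ∀ n, L n ≤ L' n) (n : ℕ) :
    relH d K L n →+ relH d K' L' n :=
  QuotientAddGroup.map _ _ (AddSubgroup.inclusion (relZ_mono d hK hL n)) (by
    intro x hx
    simp only [AddSubgroup.mem_comap, AddSubgroup.mem_addSubgroupOf,
      AddSubgroup.coe_inclusion] at hx ⊢
    exact relB_mono d hK hL n hx)

theorem InfC_le_SupC (d : ∀ n, C (n + 1) →+ C n) (D : ∀ n, AddSubgroup (C n)) :
    ∀ n, InfC d D n ≤ SupC d D n := by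
  intro n
  cases n with
  | zero => exact le_sup_left
  | succ n => exact le_trans inf_le_left le_sup_left

theorem InfC_mono (d : ∀ n, C (n + 1) →+ C n) {D D' : ∀ n, AddSubgroup (C n)}
    (h : ∀ n, D n ≤ D' n) : ∀ n, InfC d D n ≤ InfC d D' n
  | 0 => h 0
  | (n + 1) => inf_le_inf (h (n + 1)) (AddSubgroup.comap_mono (h n))

end Generic

theorem chainsOn_mono (V : Type) [LinearOrder V] (G : Type) [AddCommGroup G]
    {K K' : Set (Finset V)} (h : K ⊆ K') (n : ℕ) :
    chainsOn V G K n ≤ chainsOn V G K' n := by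
  intro c hc σ hσ
  exact h (hc σ hσ)

section Aux

variable {C : ℕ → Type} [∀ n, AddCommGroup (C n)]

theorem InfC_le_D (d : ∀ n, C (n + 1) →+ C n) (D : ∀ n, AddSubgroup (C n)) :
    ∀ n, InfC d D n ≤ D n
  | 0 => le_rfl
  | (_ + 1) => inf_le_left

theorem relZ_le_K (d : ∀ n, C (n + 1) →+ C n) (K L : ∀ n, AddSubgroup (C n)) :
    ∀ n, relZ d K L n ≤ K n
  | 0 => le_rfl
  | (_ + 1) => inf_le_left

theorem key_inj (d : ∀ n, C (n + 1) →+ C n) (hdd : ∀ n x, d n (d (n + 1) x) = 0)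
    (D : ∀ n, AddSubgroup (C n)) (n : ℕ) {x : C n}
    (hxZ : x ∈ relZ d (InfC d D) (fun _ => ⊥) n)
    (hxB : x ∈ relB d (SupC d D) (fun _ => ⊥) n) :
    x ∈ relB d (InfC d D) (fun _ => ⊥) n := by
  obtain ⟨hxB1, hxZ'⟩ := hxB
  rw [sup_bot_eq] at hxB1
  obtain ⟨w, hw, hwx⟩ := hxB1
  obtain ⟨a, ha, b', hb', hab⟩ := AddSubgroup.mem_sup.mp hw
  obtain ⟨b, hb, rfl⟩ := hb'
  have hda : d n a = x := by
    rw [← hwx, ← hab, map_add, hdd, add_zero]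
  have hxD : x ∈ D n := InfC_le_D d D n (relZ_le_K d (InfC d D) _ n hxZ)
  refine ⟨AddSubgroup.mem_sup_left ⟨a, ⟨ha, by simpa [hda] using hxD⟩, hda⟩, hxZ⟩

theorem key_surj (d : ∀ n, C (n + 1) →+ C n) (hdd : ∀ n x, d n (d (n + 1) x) = 0)
    (D : ∀ n, AddSubgroup (C n)) (n : ℕ) {z : C n}
    (hz : z ∈ relZ d (SupC d D) (fun _ => ⊥) n) :
    ∃ a, a ∈ relZ d (InfC d D) (fun _ => ⊥) n ∧
      z - a ∈ relB d (SupC d D) (fun _ => ⊥) n := by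
  cases n with
  | zero =>
    obtain ⟨a, ha, b', hb', hab⟩ := AddSubgroup.mem_sup.mp hz
    obtain ⟨b, hb, rfl⟩ := hb'
    refine ⟨a, ha, ?_, ?_⟩
    · refine AddSubgroup.mem_sup_left ⟨b, AddSubgroup.mem_sup_left hb, ?_⟩
      rw [← hab]; abel
    · exact AddSubgroup.sub_mem _ hz (AddSubgroup.mem_sup_left ha)
  | succ m =>
    obtain ⟨hzS, hzc⟩ := hz
    have hdz : d m z = 0 := by simpa using hzc
    obtain ⟨a, ha, b', hb', hab⟩ := AddSubgroup.mem_sup.mp hzS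
    obtain ⟨b, hb, rfl⟩ := hb'
    have hda : d m a = 0 := by
      have : d m z = d m a + d m (d (m + 1) b) := by rw [← hab, map_add]
      rw [hdz, hdd] at this
      simpa using this.symm
    refine ⟨a, ⟨⟨ha, by exact AddSubgroup.mem_comap.mpr (by rw [hda]; exact zero_mem _)⟩, by simp [AddSubgroup.mem_comap, hda]⟩, ?_, ?_, ?_⟩
    · refine AddSubgroup.mem_sup_left ⟨b, AddSubgroup.mem_sup_left hb, ?_⟩
      rw [← hab]; abel
    · exact AddSubgroup.sub_mem _ hzS (AddSubgroup.mem_sup_left ha)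
    · simp [map_sub, hdz, hda]

end Aux

/-- For a chain complex `(C, d)` and a graded abelian subgroup `D ⊆ C`,
the inclusion `Inf(D,C) → Sup(D,C)` induces an isomorphism on homology in every degree. -/
theorem inf_sup_homology_iso
    {C : ℕ → Type} [∀ n, AddCommGroup (C n)]
    (d : ∀ n, C (n + 1) →+ C n) (hdd : ∀ n x, d n (d (n + 1) x) = 0)
    (D : ∀ n, AddSubgroup (C n)) (n : ℕ) :
    Function.Bijective
      (inducedRelMap d (K := InfC d D) (L := fun _ => ⊥)
        (K' := SupC d D) (L' := fun _ => ⊥)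
        (InfC_le_SupC d D) (fun _ => le_rfl) n) := by
  constructor
  · rw [injective_iff_map_eq_zero]
    intro x hx
    induction x using QuotientAddGroup.induction_on with
    | H z =>
      rw [inducedRelMap, QuotientAddGroup.map_mk, QuotientAddGroup.eq_zero_iff] at hx
      rw [QuotientAddGroup.eq_zero_iff]
      have hz : (z : C n) ∈ relB d (SupC d D) (fun _ => ⊥) n := hx
      exact key_inj d hdd D n z.2 hz
  · intro x
    induction x using QuotientAddGroup.induction_on with
    | H z =>
      obtain ⟨a, haZ, hsub⟩ := key_surj d hdd D n z.2
      refine ⟨QuotientAddGroup.mk ⟨a, haZ⟩, ?_⟩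
      rw [inducedRelMap, QuotientAddGroup.map_mk, QuotientAddGroup.eq]
      show ((-AddSubgroup.inclusion _ ⟨a, haZ⟩ + z : relZ d (SupC d D) (fun _ => ⊥) n) : C n)
        ∈ relB d (SupC d D) (fun _ => ⊥) n
      simpa [neg_add_eq_sub] using hsub
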